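/- arXiv:2602.19924 — 3 statements merged into one kernel-verified Lean document; each statement's English description precedes it below -/
import Mathlib

section
/- For the curve f(x) = (x, x³), the derivative da/dx of the height function a(x) = −2x³/√(1+9x⁴) is divisible by dθ/dx, where θ(x) is the angle of the Gauss map ν(x) = (cos θ(x), sin θ(x)) = (1/√(1+9x⁴))·(−3x², 1); that is, there exists a real-analytic function b: ℝ → ℝ with da/dx = b(x)·dθ/dx for all x ∈ ℝ. -/
lemma analyticAt_sqrt' {c : ℝ} (hc : 0 < c) : AnalyticAt ℝ Real.sqrt c := by
  have h1 : AnalyticAt ℂ (fun z : ℂ => z ^ (1/2 : ℂ)) (c : ℂ) := by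
    refine AnalyticAt.cpow analyticAt_id analyticAt_const ?_
    exact Or.inl (by simpa using hc)
  have h2 : AnalyticAt ℝ (fun y : ℝ => ((y : ℂ) ^ (1/2 : ℂ)).re) c :=
    (Complex.reCLM.analyticAt _).comp
      ((h1.restrictScalars).comp (Complex.ofRealCLM.analyticAt _))
  refine h2.congr ?_
  filter_upwards [eventually_gt_nhds hc] with y hy
  rw [Real.sqrt_eq_rpow, show (1/2 : ℂ) = ((1/2 : ℝ) : ℂ) by norm_num,
    ← Complex.ofReal_cpow hy.le, Complex.ofReal_re]

lemma upos (x : ℝ) : 0 < 1 + 9 * x ^ 4 := by positivity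

lemma hasDerivAt_u (x : ℝ) : HasDerivAt (fun t : ℝ => 1 + 9 * t ^ 4) (36 * x ^ 3) x := by
  have := ((hasDerivAt_pow 4 x).const_mul (9:ℝ)).const_add (1:ℝ)
  refine this.congr_deriv ?_
  push_cast; ring

lemma hasDerivAt_s (x : ℝ) :
    HasDerivAt (fun t : ℝ => Real.sqrt (1 + 9 * t ^ 4))
      (18 * x ^ 3 / Real.sqrt (1 + 9 * x ^ 4)) x := by
  have h := (Real.hasDerivAt_sqrt (upos x).ne').comp x (hasDerivAt_u x)
  refine h.congr_deriv ?_
  field_simp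
  ring

/-- For the curve `f(x) = (x, x³)` with Gauss map angle `θ`
(`(cos θ, sin θ) = (1/√(1+9x⁴))(−3x², 1)`) and height function
`a(x) = −2x³/√(1+9x⁴)`, the derivative `a'` is divisible by `θ'`:
there is a real-analytic `b : ℝ → ℝ` with `a'(x) = b(x)·θ'(x)` for all `x`. -/
theorem height_deriv_divisible_by_angle_deriv
    (θ : ℝ → ℝ) (hθ : Differentiable ℝ θ)
    (hcos : ∀ x : ℝ, Real.cos (θ x) = -3 * x ^ 2 / Real.sqrt (1 + 9 * x ^ 4))
    (hsin : ∀ x : ℝ, Real.sin (θ x) = 1 / Real.sqrt (1 + 9 * x ^ 4))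
    (a : ℝ → ℝ) (ha : ∀ x : ℝ, a x = -2 * x ^ 3 / Real.sqrt (1 + 9 * x ^ 4)) :
    ∃ b : ℝ → ℝ, (∀ x : ℝ, AnalyticAt ℝ b x) ∧
      ∀ x : ℝ, deriv a x = b x * deriv θ x := by
  refine ⟨fun x => -(x * (1 + 3 * x ^ 4)) / Real.sqrt (1 + 9 * x ^ 4), ?_, ?_⟩
  · intro x
    have hpoly : AnalyticAt ℝ (fun t : ℝ => -(t * (1 + 3 * t ^ 4))) x := by
      apply AnalyticAt.neg
      exact (analyticAt_id).mul (analyticAt_const.add (analyticAt_const.mul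
        ((analyticAt_id).pow 4)))
    have hinner : AnalyticAt ℝ (fun t : ℝ => 1 + 9 * t ^ 4) x :=
      analyticAt_const.add (analyticAt_const.mul ((analyticAt_id).pow 4))
    have hden : AnalyticAt ℝ (fun t : ℝ => Real.sqrt (1 + 9 * t ^ 4)) x := by
      have h := AnalyticAt.comp (g := Real.sqrt) (f := fun t : ℝ => 1 + 9 * t ^ 4)
        (by
            exact analyticAt_sqrt' (upos x)) hinner
      exact h
    exact hpoly.div hden (Real.sqrt_ne_zero'.mpr (upos x))
  · intro x
    set s := Real.sqrt (1 + 9 * x ^ 4) with hs_def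
    have hs : 0 < s := Real.sqrt_pos.mpr (upos x)
    have hs2 : s ^ 2 = 1 + 9 * x ^ 4 := Real.sq_sqrt (upos x).le
    -- derivative of a
    have hA : HasDerivAt a
        (((-2 * (3 * x ^ 2)) * s - (-2 * x ^ 3) * (18 * x ^ 3 / s)) / s ^ 2) x := by
      have h1 : HasDerivAt (fun t : ℝ => -2 * t ^ 3) (-2 * (3 * x ^ 2)) x := by
        simpa using (hasDerivAt_pow 3 x).const_mul (-2 : ℝ)
      have h2 := h1.div (hasDerivAt_s x) hs.ne'
      exact h2.congr_of_eventuallyEq (by filter_upwards with t; rw [ha t]; rfl)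
    -- derivative of cos ∘ θ vs explicit
    have hG : HasDerivAt (fun t : ℝ => Real.cos (θ t))
        (((-3 * (2 * x)) * s - (-3 * x ^ 2) * (18 * x ^ 3 / s)) / s ^ 2) x := by
      have h1 : HasDerivAt (fun t : ℝ => -3 * t ^ 2) (-3 * (2 * x)) x := by
        simpa using (hasDerivAt_pow 2 x).const_mul (-3 : ℝ)
      have h2 := h1.div (hasDerivAt_s x) hs.ne'
      exact h2.congr_of_eventuallyEq (by filter_upwards with t; rw [hcos t]; rfl)
    have hG' : HasDerivAt (fun t : ℝ => Real.cos (θ t))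
        (-Real.sin (θ x) * deriv θ x) x :=
      (Real.hasDerivAt_cos (θ x)).comp x (hθ x).hasDerivAt
    have key : -Real.sin (θ x) * deriv θ x
        = ((-3 * (2 * x)) * s - (-3 * x ^ 2) * (18 * x ^ 3 / s)) / s ^ 2 :=
      hG'.unique hG
    rw [hsin x, ← hs_def] at key
    have h5 : (deriv θ x * s ^ 2 - 6 * x) * s = 0 := by
      field_simp at key
      linear_combination s * (-key + 6 * x * hs2)
    have hθ' : deriv θ x = 6 * x / s ^ 2 := by
      rcases mul_eq_zero.mp h5 with h | h
      · field_simp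
        linarith [sub_eq_zero.mp h]
      · exact absurd h hs.ne'
    rw [hA.deriv, hθ']
    simp only [← hs_def]
    field_simp
    linear_combination (-(6:ℝ) * x ^ 2) * hs2
end

section
/- The perturbed cuspidal edge f: ℝ² → ℝ³, f(x,y) = (x, y² + x², y³), is a frontal, and its Gauss map ν(x,y) = (1/√(36x²y² + 9y² + 4))·(−6xy, 3y, −2) has a dense set of regular points in ℝ², so f is a regular frontal. -/
lemma my_analyticAt_sqrt {t : ℝ} (ht : 0 < t) : AnalyticAt ℝ Real.sqrt t := by
  have h1 : AnalyticAt ℝ (fun x : ℝ => ((x : ℂ) ^ (1/2 : ℂ)).re) t := by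
    apply (Complex.reCLM.analyticAt _).comp
    apply AnalyticAt.comp (g := fun z : ℂ => z ^ (1/2 : ℂ))
    · exact AnalyticAt.restrictScalars
        ((analyticAt_id.cpow analyticAt_const) (by
          exact Complex.mem_slitPlane_iff.2 (Or.inl (by exact_mod_cast ht))))
    · exact Complex.ofRealCLM.analyticAt _
  apply h1.congr
  filter_upwards [eventually_gt_nhds ht] with x hx
  rw [Real.sqrt_eq_rpow, show ((1:ℂ)/2) = (((1:ℝ)/2 : ℝ):ℂ) by norm_num,
    ← Complex.ofReal_cpow hx.le]
  simp



/-- Dot product on `ℝ³ = ℝ × ℝ × ℝ`. -/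
def dot3 (u v : ℝ × ℝ × ℝ) : ℝ := u.1 * v.1 + u.2.1 * v.2.1 + u.2.2 * v.2.2

set_option maxHeartbeats 1000000 in
/-- The perturbed cuspidal edge `f(x,y) = (x, y² + x², y³)` is a frontal with
Gauss map `ν(x,y) = (1/√(36x²y² + 9y² + 4))·(−6xy, 3y, −2)`, and the set of
regular points of `ν` is dense in `ℝ²`, so `f` is a regular frontal. -/
theorem perturbed_cuspidal_edge_regular_frontal :
    let f : ℝ × ℝ → ℝ × ℝ × ℝ := fun p => (p.1, p.2 ^ 2 + p.1 ^ 2, p.2 ^ 3)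
    let ν : ℝ × ℝ → ℝ × ℝ × ℝ := fun p =>
      (-6 * p.1 * p.2 / Real.sqrt (36 * p.1 ^ 2 * p.2 ^ 2 + 9 * p.2 ^ 2 + 4),
        3 * p.2 / Real.sqrt (36 * p.1 ^ 2 * p.2 ^ 2 + 9 * p.2 ^ 2 + 4),
        -2 / Real.sqrt (36 * p.1 ^ 2 * p.2 ^ 2 + 9 * p.2 ^ 2 + 4))
    (∀ p : ℝ × ℝ, AnalyticAt ℝ ν p) ∧
    (∀ p : ℝ × ℝ, dot3 (ν p) (ν p) = 1) ∧
    (∀ p : ℝ × ℝ, dot3 (fderiv ℝ f p (1, 0)) (ν p) = 0) ∧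
    (∀ p : ℝ × ℝ, dot3 (fderiv ℝ f p (0, 1)) (ν p) = 0) ∧
    Dense {p : ℝ × ℝ | Function.Injective (fderiv ℝ ν p)} := by
  intro f ν
  have hQ : ∀ p : ℝ × ℝ, (0:ℝ) < 36 * p.1 ^ 2 * p.2 ^ 2 + 9 * p.2 ^ 2 + 4 := by
    intro p; positivity
  have hs : ∀ p : ℝ × ℝ, 0 < Real.sqrt (36 * p.1 ^ 2 * p.2 ^ 2 + 9 * p.2 ^ 2 + 4) :=
    fun p => Real.sqrt_pos.2 (hQ p)
  have hsq : ∀ p : ℝ × ℝ,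
      Real.sqrt (36 * p.1 ^ 2 * p.2 ^ 2 + 9 * p.2 ^ 2 + 4) *
        Real.sqrt (36 * p.1 ^ 2 * p.2 ^ 2 + 9 * p.2 ^ 2 + 4)
        = 36 * p.1 ^ 2 * p.2 ^ 2 + 9 * p.2 ^ 2 + 4 :=
    fun p => Real.mul_self_sqrt (hQ p).le
  -- analyticity of ν
  have hν : ∀ p : ℝ × ℝ, AnalyticAt ℝ ν p := by
    intro p
    have hQa : AnalyticAt ℝ (fun q : ℝ × ℝ => 36 * q.1 ^ 2 * q.2 ^ 2 + 9 * q.2 ^ 2 + 4) p :=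
      (((analyticAt_const.mul (analyticAt_fst.pow 2)).mul (analyticAt_snd.pow 2)).add
        (analyticAt_const.mul (analyticAt_snd.pow 2))).add analyticAt_const
    have hsa : AnalyticAt ℝ
        (fun q : ℝ × ℝ => Real.sqrt (36 * q.1 ^ 2 * q.2 ^ 2 + 9 * q.2 ^ 2 + 4)) p :=
      AnalyticAt.comp (g := Real.sqrt)
        (f := fun q : ℝ × ℝ => 36 * q.1 ^ 2 * q.2 ^ 2 + 9 * q.2 ^ 2 + 4)
        (my_analyticAt_sqrt (hQ p)) hQa
    exact ((((analyticAt_const.mul analyticAt_fst).mul analyticAt_snd).div hsa (hs p).ne').prod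
      (((analyticAt_const.mul analyticAt_snd).div hsa (hs p).ne').prod
        (analyticAt_const.div hsa (hs p).ne')))
  refine ⟨hν, ?_, ?_, ?_, ?_⟩
  · -- unit normal
    intro p
    show dot3 (ν p) (ν p) = 1
    simp only [ν, dot3]
    have h := hsq p
    have hne := (hs p).ne'
    field_simp
    rw [Real.sq_sqrt (by positivity)]; ring
  · -- ∂f/∂x · ν = 0
    intro p
    have h2 : HasFDerivAt (fun q : ℝ × ℝ => q.2 ^ 2 + q.1 ^ 2)
        ((p.2 • ContinuousLinearMap.snd ℝ ℝ ℝ + p.2 • ContinuousLinearMap.snd ℝ ℝ ℝ) +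
          (p.1 • ContinuousLinearMap.fst ℝ ℝ ℝ + p.1 • ContinuousLinearMap.fst ℝ ℝ ℝ)) p := by
      simpa [pow_two, Pi.mul_def, Pi.add_def] using
        ((hasFDerivAt_snd (𝕜 := ℝ) (p := p)).mul hasFDerivAt_snd).add
          (hasFDerivAt_fst.mul hasFDerivAt_fst)
    have h3 : HasFDerivAt (fun q : ℝ × ℝ => q.2 ^ 3)
        ((p.2 * p.2) • ContinuousLinearMap.snd ℝ ℝ ℝ +
          p.2 • (p.2 • ContinuousLinearMap.snd ℝ ℝ ℝ + p.2 • ContinuousLinearMap.snd ℝ ℝ ℝ)) p := by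
      have := ((hasFDerivAt_snd (𝕜 := ℝ) (p := p)).mul hasFDerivAt_snd).mul hasFDerivAt_snd
      simpa [pow_succ, pow_zero, one_mul, Pi.mul_def] using this
    have hf : HasFDerivAt f _ p :=
      (hasFDerivAt_fst (𝕜 := ℝ) (p := p)).prodMk (h2.prodMk h3)
    rw [hf.fderiv]
    simp only [ν, dot3, ContinuousLinearMap.prod_apply, ContinuousLinearMap.add_apply,
      ContinuousLinearMap.smul_apply, ContinuousLinearMap.coe_fst', ContinuousLinearMap.coe_snd',
      smul_eq_mul]
    have hne := (hs p).ne'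
    field_simp
    ring
  · -- ∂f/∂y · ν = 0
    intro p
    have h2 : HasFDerivAt (fun q : ℝ × ℝ => q.2 ^ 2 + q.1 ^ 2)
        ((p.2 • ContinuousLinearMap.snd ℝ ℝ ℝ + p.2 • ContinuousLinearMap.snd ℝ ℝ ℝ) +
          (p.1 • ContinuousLinearMap.fst ℝ ℝ ℝ + p.1 • ContinuousLinearMap.fst ℝ ℝ ℝ)) p := by
      simpa [pow_two, Pi.mul_def, Pi.add_def] using
        ((hasFDerivAt_snd (𝕜 := ℝ) (p := p)).mul hasFDerivAt_snd).add
          (hasFDerivAt_fst.mul hasFDerivAt_fst)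
    have h3 : HasFDerivAt (fun q : ℝ × ℝ => q.2 ^ 3)
        ((p.2 * p.2) • ContinuousLinearMap.snd ℝ ℝ ℝ +
          p.2 • (p.2 • ContinuousLinearMap.snd ℝ ℝ ℝ + p.2 • ContinuousLinearMap.snd ℝ ℝ ℝ)) p := by
      have := ((hasFDerivAt_snd (𝕜 := ℝ) (p := p)).mul hasFDerivAt_snd).mul hasFDerivAt_snd
      simpa [pow_succ, pow_zero, one_mul, Pi.mul_def] using this
    have hf : HasFDerivAt f _ p :=
      (hasFDerivAt_fst (𝕜 := ℝ) (p := p)).prodMk (h2.prodMk h3)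
    rw [hf.fderiv]
    simp only [ν, dot3, ContinuousLinearMap.prod_apply, ContinuousLinearMap.add_apply,
      ContinuousLinearMap.smul_apply, ContinuousLinearMap.coe_fst', ContinuousLinearMap.coe_snd',
      smul_eq_mul]
    have hne := (hs p).ne'
    field_simp
    ring
  · -- density of regular points
    have hd : Dense {p : ℝ × ℝ | p.2 ≠ 0} := by
      have he : {p : ℝ × ℝ | p.2 ≠ 0} = (Set.univ : Set ℝ) ×ˢ ({(0:ℝ)}ᶜ) := by
        ext q; simp [Set.mem_prod]
      rw [he]
      exact dense_univ.prod (dense_compl_singleton 0)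
    refine hd.mono ?_
    intro p hp
    have hp2 : p.2 ≠ 0 := hp
    show Function.Injective (fderiv ℝ ν p)
    -- auxiliary map h and F with h ∘ ν = F
    set s := Real.sqrt (36 * p.1 ^ 2 * p.2 ^ 2 + 9 * p.2 ^ 2 + 4) with hsdef
    have hsne : s ≠ 0 := (hs p).ne'
    have hνd : DifferentiableAt ℝ ν p := (hν p).differentiableAt
    have hν3 : (ν p).2.2 ≠ 0 := by
      show -2 / s ≠ 0
      exact div_ne_zero (by norm_num) hsne
    have hh : DifferentiableAt ℝ (fun u : ℝ × ℝ × ℝ => (u.1 * (u.2.2)⁻¹, u.2.1 * (u.2.2)⁻¹)) (ν p) := by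
      have hw : DifferentiableAt ℝ (fun u : ℝ × ℝ × ℝ => u.2.2) (ν p) :=
        differentiableAt_snd.snd
      have hu : DifferentiableAt ℝ (fun u : ℝ × ℝ × ℝ => u.1) (ν p) := differentiableAt_fst
      have hv : DifferentiableAt ℝ (fun u : ℝ × ℝ × ℝ => u.2.1) (ν p) :=
        differentiableAt_snd.fst
      exact (hu.mul (hw.inv hν3)).prodMk (hv.mul (hw.inv hν3))
    have hFcomp : (fun u : ℝ × ℝ × ℝ => (u.1 * (u.2.2)⁻¹, u.2.1 * (u.2.2)⁻¹)) ∘ ν =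
        fun q : ℝ × ℝ => (3 * q.1 * q.2, -(3/2) * q.2) := by
      funext q
      have hq : Real.sqrt (36 * q.1 ^ 2 * q.2 ^ 2 + 9 * q.2 ^ 2 + 4) ≠ 0 := (hs q).ne'
      simp only [Function.comp_apply, ν, Prod.mk.injEq]
      constructor <;> · field_simp; try ring
    have hcomp := fderiv_comp p hh hνd
    rw [hFcomp] at hcomp
    -- derivative of F
    have hF : HasFDerivAt (fun q : ℝ × ℝ => (3 * q.1 * q.2, -(3/2) * q.2))
        (((3 * p.1) • ContinuousLinearMap.snd ℝ ℝ ℝ +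
            p.2 • ((3:ℝ) • ContinuousLinearMap.fst ℝ ℝ ℝ)).prod
          ((-(3/2) : ℝ) • ContinuousLinearMap.snd ℝ ℝ ℝ)) p := by
      have h1 : HasFDerivAt (fun q : ℝ × ℝ => 3 * q.1)
          ((3:ℝ) • ContinuousLinearMap.fst ℝ ℝ ℝ) p :=
        (hasFDerivAt_fst (𝕜 := ℝ) (p := p)).const_mul 3
      have h2 := h1.mul (hasFDerivAt_snd (𝕜 := ℝ) (p := p))
      have h3 : HasFDerivAt (fun q : ℝ × ℝ => -(3/2) * q.2)
          ((-(3/2) : ℝ) • ContinuousLinearMap.snd ℝ ℝ ℝ) p :=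
        (hasFDerivAt_snd (𝕜 := ℝ) (p := p)).const_mul (-(3/2))
      exact h2.prodMk h3
    rw [hF.fderiv] at hcomp
    -- injectivity of the composite
    have hinj : Function.Injective
        ⇑(((3 * p.1) • ContinuousLinearMap.snd ℝ ℝ ℝ +
            p.2 • ((3:ℝ) • ContinuousLinearMap.fst ℝ ℝ ℝ)).prod
          ((-(3/2) : ℝ) • ContinuousLinearMap.snd ℝ ℝ ℝ)) := by
      intro z w hzw
      simp only [ContinuousLinearMap.prod_apply, ContinuousLinearMap.add_apply,
        ContinuousLinearMap.smul_apply, ContinuousLinearMap.coe_fst',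
        ContinuousLinearMap.coe_snd', smul_eq_mul, Prod.mk.injEq] at hzw
      obtain ⟨h1, h2⟩ := hzw
      have hz2 : z.2 = w.2 := by linarith
      have hz1 : z.1 = w.1 := by
        rw [hz2] at h1
        have : p.2 * (3 * z.1) = p.2 * (3 * w.1) := by linarith
        have := mul_left_cancel₀ hp2 this
        linarith
      exact Prod.ext hz1 hz2
    rw [hcomp] at hinj
    rw [ContinuousLinearMap.coe_comp'] at hinj
    exact Function.Injective.of_comp hinj
end

section
/- Let f: U → ℝ^{n+1} be a pseudo regular frontal with Gauss map ν: Reg(f) → S^n and height function a = f·ν. Write ν = ν^n ∘ θ with θ = (θ₁,…,θₙ): Reg(f) → (−π,π)^n. Then at every regular point x of ν, the map dθ_x is a linear isomorphism, and consequently the linear system da = b₁ dθ₁ + ⋯ + bₙ dθₙ has a unique solution (b₁(x),…,bₙ(x)); moreover f(x) = a(x)ν(x) + Σⱼ (bⱼ(x)/|μ̃ⱼ(θ(x))|) μⱼ(x), where μⱼ = (μ̃ⱼ/|μ̃ⱼ|) ∘ θ. -/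
open Real

/-- The standard spherical coordinate parametrization `νⁿ : (−π,π)ⁿ → Sⁿ`. -/
noncomputable def sphParam (n : ℕ) (θ : Fin n → ℝ) : Fin (n + 1) → ℝ :=
  fun j =>
    if h : (j : ℕ) = 0 then ∏ i, Real.cos (θ i)
    else
      Real.sin (θ ⟨n - j, by have := j.isLt; omega⟩) *
        ∏ i ∈ Finset.univ.filter (fun i : Fin n => (i : ℕ) < n - (j : ℕ)),
          Real.cos (θ i)

/-- The partial derivative `μ̃ⱼ = ∂νⁿ/∂θⱼ`. -/
noncomputable def sphPartial (n : ℕ) (j : Fin n) (θ : Fin n → ℝ) :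
    Fin (n + 1) → ℝ :=
  fderiv ℝ (sphParam n) θ (Pi.single j 1)

namespace SPF

/-- indices below `m` -/
def fil (n m : ℕ) : Finset (Fin n) := Finset.univ.filter (fun i : Fin n => (i : ℕ) < m)

lemma mem_fil {n m : ℕ} {i : Fin n} : i ∈ fil n m ↔ (i : ℕ) < m := by
  simp [fil]

lemma fil_top {n m : ℕ} (h : n ≤ m) : fil n m = Finset.univ := by
  ext i; simp [mem_fil]; exact lt_of_lt_of_le i.isLt h

lemma fil_succ {n m : ℕ} (h : m < n) :
    fil n (m + 1) = insert ⟨m, h⟩ (fil n m) := by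
  ext i
  simp only [mem_fil, Finset.mem_insert]
  constructor
  · intro hi
    rcases Nat.lt_succ_iff_lt_or_eq.1 hi with hi | hi
    · exact Or.inr hi
    · exact Or.inl (Fin.ext hi)
  · rintro (rfl | hi)
    · exact Nat.lt_succ_self m
    · exact Nat.lt_succ_of_lt hi

lemma self_not_mem_fil {n m : ℕ} (h : m < n) : (⟨m, h⟩ : Fin n) ∉ fil n m := by
  simp [mem_fil]

noncomputable def cs (n : ℕ) (θ : Fin n → ℝ) (m : ℕ) : ℝ :=
  ∏ i ∈ fil n m, Real.cos (θ i)

noncomputable def csx (n : ℕ) (θ : Fin n → ℝ) (m : ℕ) (p : Fin n) : ℝ :=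
  ∏ i ∈ (fil n m).erase p, Real.cos (θ i)

noncomputable def csy (n : ℕ) (θ : Fin n → ℝ) (m : ℕ) (p q : Fin n) : ℝ :=
  ∏ i ∈ ((fil n m).erase p).erase q, Real.cos (θ i)

/-- `V` from the informal proof: the components of `sphParam` reindexed by `m = n - k`. -/
noncomputable def sV (n : ℕ) (θ : Fin n → ℝ) (m : ℕ) : ℝ :=
  if h : m < n then Real.sin (θ ⟨m, h⟩) * cs n θ m else cs n θ n

/-- closed formula for the partial derivatives, reindexed by `m = n - k`. -/
noncomputable def muF (n : ℕ) (θ : Fin n → ℝ) (p : Fin n) (m : ℕ) : ℝ :=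
  if m < (p : ℕ) then 0
  else if m = (p : ℕ) then Real.cos (θ p) * cs n θ (p : ℕ)
  else -Real.sin (θ p) * (if h : m < n then Real.sin (θ ⟨m, h⟩) else 1) * csx n θ m p

lemma cs_zero (n : ℕ) (θ : Fin n → ℝ) : cs n θ 0 = 1 := by
  simp [cs, fil]

lemma cs_succ (n : ℕ) (θ : Fin n → ℝ) {m : ℕ} (h : m < n) :
    cs n θ (m + 1) = Real.cos (θ ⟨m, h⟩) * cs n θ m := by
  rw [cs, fil_succ h, Finset.prod_insert (self_not_mem_fil h)]; rfl

lemma cs_eq_mul_csx (n : ℕ) (θ : Fin n → ℝ) {m : ℕ} {p : Fin n} (h : (p : ℕ) < m) :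
    cs n θ m = Real.cos (θ p) * csx n θ m p := by
  rw [cs, csx, ← Finset.mul_prod_erase _ _ (mem_fil.2 h)]

lemma csx_succ (n : ℕ) (θ : Fin n → ℝ) {m : ℕ} (h : m < n) {p : Fin n}
    (hp : (p : ℕ) ≠ m) :
    csx n θ (m + 1) p = Real.cos (θ ⟨m, h⟩) * csx n θ m p := by
  rw [csx, csx, fil_succ h, Finset.erase_insert_of_ne (by simpa [Fin.ext_iff, eq_comm] using hp),
    Finset.prod_insert (by simp [Finset.mem_erase, self_not_mem_fil h])]

lemma csx_succ_self (n : ℕ) (θ : Fin n → ℝ) {p : Fin n} (h : (p : ℕ) < n) :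
    csx n θ ((p : ℕ) + 1) p = cs n θ (p : ℕ) := by
  rw [csx, cs, fil_succ h]
  have : (⟨(p : ℕ), h⟩ : Fin n) = p := rfl
  rw [this, Finset.erase_insert (by simpa using self_not_mem_fil h)]

lemma csx_eq_mul_csy (n : ℕ) (θ : Fin n → ℝ) {m : ℕ} {p q : Fin n}
    (hq : (q : ℕ) < m) (hpq : p ≠ q) :
    csx n θ m p = Real.cos (θ q) * csy n θ m p q := by
  rw [csx, csy, ← Finset.mul_prod_erase _ _ (Finset.mem_erase.2 ⟨Ne.symm hpq, mem_fil.2 hq⟩)]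

lemma csy_succ (n : ℕ) (θ : Fin n → ℝ) {m : ℕ} (h : m < n) {p q : Fin n}
    (hp : (p : ℕ) ≠ m) (hq : (q : ℕ) ≠ m) :
    csy n θ (m + 1) p q = Real.cos (θ ⟨m, h⟩) * csy n θ m p q := by
  rw [csy, csy, fil_succ h, Finset.erase_insert_of_ne (by simpa [Fin.ext_iff, eq_comm] using hp),
    Finset.erase_insert_of_ne (by simpa [Fin.ext_iff, eq_comm] using hq),
    Finset.prod_insert (by simp [Finset.mem_erase, self_not_mem_fil h])]

lemma csy_succ_self (n : ℕ) (θ : Fin n → ℝ) {p q : Fin n} (h : (q : ℕ) < n)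
    (hpq : (p:ℕ) < (q:ℕ)) :
    csy n θ ((q : ℕ) + 1) p q = csx n θ (q : ℕ) p := by
  rw [csy, csx, fil_succ h]
  have hq : (⟨(q : ℕ), h⟩ : Fin n) = q := rfl
  rw [hq, Finset.erase_insert_of_ne (by simp [Fin.ext_iff]; omega)]
  rw [Finset.erase_insert (by simp [Finset.mem_erase]; intro _; simpa using self_not_mem_fil h)]

lemma sphParam_eq_sV (n : ℕ) (θ : Fin n → ℝ) (k : Fin (n + 1)) :
    sphParam n θ k = sV n θ (n - (k : ℕ)) := by
  rcases Nat.eq_zero_or_pos (k : ℕ) with h0 | h0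
  · rw [sphParam, dif_pos h0, h0, Nat.sub_zero, sV, dif_neg (lt_irrefl n), cs, fil_top le_rfl]
  · have hk : (k : ℕ) ≠ 0 := Nat.pos_iff_ne_zero.1 h0
    have hlt : n - (k : ℕ) < n := by have := k.isLt; omega
    rw [sphParam, dif_neg hk, sV, dif_pos hlt]
    rfl

lemma sum_Ico_telescope (h : ℕ → ℝ) {a b : ℕ} (hab : a ≤ b) :
    ∑ m ∈ Finset.Ico a b, (h m - h (m + 1)) = h a - h b := by
  induction b, hab using Nat.le_induction with
  | base => simp
  | succ b hab ih => rw [Finset.sum_Ico_succ_top hab, ih]; ring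

lemma I1 (n : ℕ) (θ : Fin n → ℝ) :
    ∑ m ∈ Finset.range (n + 1), (sV n θ m) ^ 2 = 1 := by
  rw [Finset.sum_range_succ]
  have h1 : ∀ m ∈ Finset.range n,
      (sV n θ m) ^ 2 = (cs n θ m) ^ 2 - (cs n θ (m + 1)) ^ 2 := by
    intro m hm
    have hm' : m < n := Finset.mem_range.1 hm
    rw [sV, dif_pos hm', cs_succ n θ hm', mul_pow, mul_pow, Real.sin_sq]
    ring
  rw [Finset.sum_congr rfl h1]
  have h2 : ∑ m ∈ Finset.range n, ((cs n θ m) ^ 2 - (cs n θ (m + 1)) ^ 2)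
      = (cs n θ 0) ^ 2 - (cs n θ n) ^ 2 := by
    rw [Finset.range_eq_Ico]; exact sum_Ico_telescope _ (Nat.zero_le n)
  rw [h2, sV, dif_neg (lt_irrefl n), cs_zero]
  ring

lemma I2 (n : ℕ) (θ : Fin n → ℝ) (p : Fin n) :
    ∑ m ∈ Finset.range (n + 1), sV n θ m * muF n θ p m = 0 := by
  have hp : (p : ℕ) < n := p.isLt
  rw [Finset.range_eq_Ico,
    ← Finset.sum_Ico_consecutive _ (Nat.zero_le ((p : ℕ) + 1)) (by omega : (p : ℕ) + 1 ≤ n + 1)]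
  have hA : ∑ m ∈ Finset.Ico 0 ((p : ℕ) + 1), sV n θ m * muF n θ p m
      = Real.sin (θ p) * Real.cos (θ p) * (cs n θ (p : ℕ)) ^ 2 := by
    rw [← Finset.range_eq_Ico, Finset.sum_range_succ, Finset.sum_eq_zero, zero_add]
    · rw [sV, dif_pos hp, muF, if_neg (lt_irrefl _), if_pos rfl]
      have heta : (⟨(p : ℕ), hp⟩ : Fin n) = p := rfl
      rw [heta]; ring
    · intro m hm
      have : m < (p : ℕ) := Finset.mem_range.1 hm
      rw [muF, if_pos this, mul_zero]
  have hB : ∑ m ∈ Finset.Ico ((p : ℕ) + 1) (n + 1), sV n θ m * muF n θ p m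
      = -(Real.sin (θ p) * Real.cos (θ p) * (cs n θ (p : ℕ)) ^ 2) := by
    rw [Finset.sum_Ico_succ_top (by omega : (p : ℕ) + 1 ≤ n)]
    have hcong : ∀ m ∈ Finset.Ico ((p : ℕ) + 1) n, sV n θ m * muF n θ p m
        = (-(Real.sin (θ p) * Real.cos (θ p))) *
          ((csx n θ m p) ^ 2 - (csx n θ (m + 1) p) ^ 2) := by
      intro m hm
      obtain ⟨hm1, hm2⟩ := Finset.mem_Ico.1 hm
      rw [sV, dif_pos hm2, muF, if_neg (by omega), if_neg (by omega), dif_pos hm2,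
        cs_eq_mul_csx n θ (by omega : (p : ℕ) < m),
        csx_succ n θ hm2 (by omega : (p : ℕ) ≠ m)]
      linear_combination (-(Real.sin (θ p) * Real.cos (θ p)) * (csx n θ m p) ^ 2) *
        Real.sin_sq_add_cos_sq (θ ⟨m, hm2⟩)
    rw [Finset.sum_congr rfl hcong, ← Finset.mul_sum]
    have htel : ∑ m ∈ Finset.Ico ((p : ℕ) + 1) n,
        ((csx n θ m p) ^ 2 - (csx n θ (m + 1) p) ^ 2)
        = (csx n θ ((p : ℕ) + 1) p) ^ 2 - (csx n θ n p) ^ 2 :=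
      sum_Ico_telescope _ (by omega)
    rw [htel, csx_succ_self n θ hp, sV, dif_neg (lt_irrefl n), muF,
      if_neg (by omega), if_neg (by omega), dif_neg (lt_irrefl n),
      cs_eq_mul_csx n θ (hp : (p : ℕ) < n)]
    ring
  rw [hA, hB]; ring

lemma csy_comm (n : ℕ) (θ : Fin n → ℝ) (m : ℕ) (p q : Fin n) :
    csy n θ m p q = csy n θ m q p := by
  rw [csy, csy, Finset.erase_right_comm]

lemma I3 (n : ℕ) (θ : Fin n → ℝ) (p q : Fin n) (hpq : (p : ℕ) < (q : ℕ)) :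
    ∑ m ∈ Finset.range (n + 1), muF n θ p m * muF n θ q m = 0 := by
  have hq : (q : ℕ) < n := q.isLt
  have hp : (p : ℕ) < n := p.isLt
  have hpqne : p ≠ q := fun h => by subst h; exact lt_irrefl _ hpq
  rw [Finset.range_eq_Ico,
    ← Finset.sum_Ico_consecutive _ (Nat.zero_le ((q : ℕ) + 1)) (by omega : (q : ℕ) + 1 ≤ n + 1)]
  have hA : ∑ m ∈ Finset.Ico 0 ((q : ℕ) + 1), muF n θ p m * muF n θ q m
      = -(Real.sin (θ p) * Real.sin (θ q) * Real.cos (θ p) * Real.cos (θ q)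
          * (csy n θ ((q : ℕ) + 1) p q) ^ 2) := by
    rw [← Finset.range_eq_Ico, Finset.sum_range_succ, Finset.sum_eq_zero, zero_add]
    · rw [muF, if_neg (by omega), if_neg (by omega), dif_pos hq]
      rw [muF, if_neg (lt_irrefl _), if_pos rfl]
      have heta : (⟨(q : ℕ), hq⟩ : Fin n) = q := rfl
      rw [heta, cs_eq_mul_csx n θ (hpq : (p : ℕ) < (q : ℕ)),
        csy_succ_self n θ hq hpq]
      ring
    · intro m hm
      have : m < (q : ℕ) := Finset.mem_range.1 hm
      have h0 : muF n θ q m = 0 := by rw [muF, if_pos this]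
      rw [h0, mul_zero]
  have hB : ∑ m ∈ Finset.Ico ((q : ℕ) + 1) (n + 1), muF n θ p m * muF n θ q m
      = Real.sin (θ p) * Real.sin (θ q) * Real.cos (θ p) * Real.cos (θ q)
          * (csy n θ ((q : ℕ) + 1) p q) ^ 2 := by
    rw [Finset.sum_Ico_succ_top (by omega : (q : ℕ) + 1 ≤ n)]
    have hcong : ∀ m ∈ Finset.Ico ((q : ℕ) + 1) n, muF n θ p m * muF n θ q m
        = (Real.sin (θ p) * Real.sin (θ q) * Real.cos (θ p) * Real.cos (θ q)) *
          ((csy n θ m p q) ^ 2 - (csy n θ (m + 1) p q) ^ 2) := by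
      intro m hm
      obtain ⟨hm1, hm2⟩ := Finset.mem_Ico.1 hm
      rw [muF, if_neg (by omega), if_neg (by omega), dif_pos hm2,
        muF, if_neg (by omega), if_neg (by omega), dif_pos hm2,
        csx_eq_mul_csy n θ (by omega : (q : ℕ) < m) hpqne,
        csx_eq_mul_csy n θ (by omega : (p : ℕ) < m) hpqne.symm,
        csy_comm n θ m q p,
        csy_succ n θ hm2 (by omega : (p : ℕ) ≠ m) (by omega : (q : ℕ) ≠ m)]
      linear_combination (Real.sin (θ p) * Real.sin (θ q) * Real.cos (θ p) * Real.cos (θ q) *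
        (csy n θ m p q) ^ 2) * Real.sin_sq_add_cos_sq (θ ⟨m, hm2⟩)
    rw [Finset.sum_congr rfl hcong, ← Finset.mul_sum]
    have htel : ∑ m ∈ Finset.Ico ((q : ℕ) + 1) n,
        ((csy n θ m p q) ^ 2 - (csy n θ (m + 1) p q) ^ 2)
        = (csy n θ ((q : ℕ) + 1) p q) ^ 2 - (csy n θ n p q) ^ 2 :=
      sum_Ico_telescope _ (by omega)
    rw [htel]
    rw [muF, if_neg (by omega), if_neg (by omega), dif_neg (lt_irrefl n),
      muF, if_neg (by omega), if_neg (by omega), dif_neg (lt_irrefl n),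
      csx_eq_mul_csy n θ (by omega : (q : ℕ) < n) hpqne,
      csx_eq_mul_csy n θ (by omega : (p : ℕ) < n) hpqne.symm,
      csy_comm n θ n q p]
    ring
  rw [hA, hB]; ring

noncomputable def Dsph (n : ℕ) (θ : Fin n → ℝ) : (Fin n → ℝ) →L[ℝ] (Fin (n + 1) → ℝ) :=
  ContinuousLinearMap.pi fun k : Fin (n + 1) =>
    ∑ p, muF n θ p (n - (k : ℕ)) • (ContinuousLinearMap.proj p : (Fin n → ℝ) →L[ℝ] ℝ)

lemma Dsph_apply (n : ℕ) (θ v : Fin n → ℝ) (k : Fin (n + 1)) :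
    Dsph n θ v k = ∑ p, muF n θ p (n - (k : ℕ)) * v p := by
  simp [Dsph, ContinuousLinearMap.pi_apply, ContinuousLinearMap.sum_apply,
    ContinuousLinearMap.smul_apply, ContinuousLinearMap.proj_apply, smul_eq_mul]

lemma hasFDerivAt_cos_coord {n : ℕ} (θ : Fin n → ℝ) (i : Fin n) :
    HasFDerivAt (fun θ : Fin n → ℝ => Real.cos (θ i))
      ((-Real.sin (θ i)) • (ContinuousLinearMap.proj i : (Fin n → ℝ) →L[ℝ] ℝ)) θ :=
  by have := (Real.hasDerivAt_cos (θ i)).comp_hasFDerivAt θ (hasFDerivAt_apply (𝕜 := ℝ) i θ); exact this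

lemma hasFDerivAt_sin_coord {n : ℕ} (θ : Fin n → ℝ) (i : Fin n) :
    HasFDerivAt (fun θ : Fin n → ℝ => Real.sin (θ i))
      ((Real.cos (θ i)) • (ContinuousLinearMap.proj i : (Fin n → ℝ) →L[ℝ] ℝ)) θ :=
  by have := (Real.hasDerivAt_sin (θ i)).comp_hasFDerivAt θ (hasFDerivAt_apply (𝕜 := ℝ) i θ); exact this

lemma hasFDerivAt_cos_prod {n : ℕ} (θ : Fin n → ℝ) (s : Finset (Fin n)) :
    HasFDerivAt (fun θ : Fin n → ℝ => ∏ i ∈ s, Real.cos (θ i))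
      (∑ i ∈ s, (∏ j ∈ s.erase i, Real.cos (θ j)) •
        ((-Real.sin (θ i)) • (ContinuousLinearMap.proj i : (Fin n → ℝ) →L[ℝ] ℝ))) θ :=
  HasFDerivAt.finset_prod fun i _ => hasFDerivAt_cos_coord θ i

lemma hasFDerivAt_sV (n : ℕ) (θ : Fin n → ℝ) (m : ℕ) (hm : m ≤ n) :
    HasFDerivAt (fun θ => sV n θ m)
      (∑ p, muF n θ p m • (ContinuousLinearMap.proj p : (Fin n → ℝ) →L[ℝ] ℝ)) θ := by
  rcases eq_or_lt_of_le hm with hm' | hm'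
  · have hfun : (fun θ : Fin n → ℝ => sV n θ m) = fun θ => ∏ i ∈ fil n m, Real.cos (θ i) := by
      funext θ; rw [sV, dif_neg (by omega), hm']; rfl
    rw [hfun]
    refine (hasFDerivAt_cos_prod θ (fil n m)).congr_fderiv ?_
    rw [fil_top (by omega)]
    apply Finset.sum_congr rfl
    intro p _
    rw [smul_smul]
    have hval : muF n θ p m = (∏ j ∈ Finset.univ.erase p, Real.cos (θ j)) * -Real.sin (θ p) := by
      rw [muF, if_neg (by have := p.isLt; omega), if_neg (by have := p.isLt; omega),
        dif_neg (by omega), csx, fil_top (by omega)]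
      ring
    rw [hval]
  · have hfun : (fun θ : Fin n → ℝ => sV n θ m)
        = fun θ => Real.sin (θ ⟨m, hm'⟩) * ∏ i ∈ fil n m, Real.cos (θ i) := by
      funext θ; rw [sV, dif_pos hm']; rfl
    rw [hfun]
    refine ((hasFDerivAt_sin_coord θ ⟨m, hm'⟩).mul (hasFDerivAt_cos_prod θ (fil n m))).congr_fderiv ?_
    ext v
    simp only [ContinuousLinearMap.add_apply, ContinuousLinearMap.smul_apply,
      ContinuousLinearMap.sum_apply, ContinuousLinearMap.proj_apply, smul_eq_mul]
    have hvanish : ∀ p ∈ Finset.univ, p ∉ fil n (m + 1) → muF n θ p m * v p = 0 := by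
      intro p _ hp
      have hpm : m < (p : ℕ) := by
        by_contra h
        exact hp (mem_fil.2 (by omega))
      rw [muF, if_pos hpm, zero_mul]
    rw [← Finset.sum_subset (Finset.subset_univ (fil n (m + 1))) hvanish,
      fil_succ hm', Finset.sum_insert (self_not_mem_fil hm')]
    have hdiag : muF n θ ⟨m, hm'⟩ m = Real.cos (θ ⟨m, hm'⟩) * cs n θ m := by
      rw [muF, if_neg (lt_irrefl m), if_pos rfl]
    have hoff : ∀ p ∈ fil n m, muF n θ p m * v p
        = -Real.sin (θ p) * Real.sin (θ ⟨m, hm'⟩) * csx n θ m p * v p := by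
      intro p hp
      have hpm : (p : ℕ) < m := mem_fil.1 hp
      rw [muF, if_neg (by omega), if_neg (by omega), dif_pos hm']
    rw [Finset.sum_congr rfl hoff, hdiag]
    simp only [cs, csx, Finset.mul_sum]
    have hterm : ∀ i ∈ fil n m,
        Real.sin (θ ⟨m, hm'⟩) *
          ((∏ j ∈ (fil n m).erase i, Real.cos (θ j)) * (-Real.sin (θ i) * v i))
        = (-Real.sin (θ i) * Real.sin (θ ⟨m, hm'⟩) *
            ∏ j ∈ (fil n m).erase i, Real.cos (θ j)) * v i := by
      intro i _; ring
    rw [Finset.sum_congr rfl hterm]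
    ring

lemma hasFDerivAt_sphParam (n : ℕ) (θ : Fin n → ℝ) :
    HasFDerivAt (sphParam n) (Dsph n θ) θ := by
  apply hasFDerivAt_pi''
  intro k
  rw [Dsph, ContinuousLinearMap.proj_pi]
  have hfun : (fun θ : Fin n → ℝ => sphParam n θ k) = fun θ => sV n θ (n - (k : ℕ)) :=
    funext fun θ => sphParam_eq_sV n θ k
  rw [show (fun x : Fin n → ℝ => sphParam n x k) = fun θ => sV n θ (n - (k : ℕ)) from hfun]
  exact hasFDerivAt_sV n θ (n - (k : ℕ)) (Nat.sub_le n (k : ℕ))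

lemma sphPartial_eq (n : ℕ) (j : Fin n) (θ : Fin n → ℝ) (k : Fin (n + 1)) :
    sphPartial n j θ k = muF n θ j (n - (k : ℕ)) := by
  rw [sphPartial, (hasFDerivAt_sphParam n θ).fderiv, Dsph_apply]
  rw [Finset.sum_eq_single j]
  · simp
  · intro p _ hp
    simp [Pi.single_apply, hp]
  · intro h
    exact absurd (Finset.mem_univ j) h

lemma rev_sum {n : ℕ} (F : ℕ → ℝ) :
    ∑ k : Fin (n + 1), F (n - (k : ℕ)) = ∑ m ∈ Finset.range (n + 1), F m := by
  have h1 : ∑ k : Fin (n + 1), F (n - (k : ℕ))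
      = ∑ k : Fin (n + 1), F ((Fin.rev k : Fin (n + 1)) : ℕ) := by
    apply Finset.sum_congr rfl
    intro k _
    congr 1
    rw [Fin.val_rev]
    have := k.isLt; omega
  have h2 : ∑ k : Fin (n + 1), F ((Fin.rev k : Fin (n + 1)) : ℕ)
      = ∑ k : Fin (n + 1), F (k : ℕ) := by
    have := Equiv.sum_comp (Fin.revPerm : Equiv.Perm (Fin (n + 1))) (fun k => F (k : ℕ))
    simpa using this
  rw [h1, h2, Fin.sum_univ_eq_sum_range]

lemma dot_sph_sph (n : ℕ) (θ : Fin n → ℝ) :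
    ∑ k : Fin (n + 1), sphParam n θ k * sphParam n θ k = 1 := by
  have h : ∑ k : Fin (n + 1), sphParam n θ k * sphParam n θ k
      = ∑ k : Fin (n + 1), (sV n θ (n - (k : ℕ))) ^ 2 := by
    apply Finset.sum_congr rfl
    intro k _
    rw [sphParam_eq_sV, sq]
  rw [h, rev_sum (fun m => (sV n θ m) ^ 2), I1]

lemma dot_sph_mu (n : ℕ) (θ : Fin n → ℝ) (j : Fin n) :
    ∑ k : Fin (n + 1), sphParam n θ k * sphPartial n j θ k = 0 := by
  have h : ∑ k : Fin (n + 1), sphParam n θ k * sphPartial n j θ k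
      = ∑ k : Fin (n + 1), (fun m => sV n θ m * muF n θ j m) (n - (k : ℕ)) := by
    apply Finset.sum_congr rfl
    intro k _
    rw [sphParam_eq_sV, sphPartial_eq]
  rw [h, rev_sum (fun m => sV n θ m * muF n θ j m), I2]

lemma dot_mu_mu (n : ℕ) (θ : Fin n → ℝ) {p q : Fin n} (hpq : p ≠ q) :
    ∑ k : Fin (n + 1), sphPartial n p θ k * sphPartial n q θ k = 0 := by
  rcases lt_or_gt_of_ne (fun h : (p : ℕ) = (q : ℕ) => hpq (Fin.ext h)) with h | h
  · have heq : ∑ k : Fin (n + 1), sphPartial n p θ k * sphPartial n q θ k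
        = ∑ k : Fin (n + 1), (fun m => muF n θ p m * muF n θ q m) (n - (k : ℕ)) := by
      apply Finset.sum_congr rfl
      intro k _
      rw [sphPartial_eq, sphPartial_eq]
    rw [heq, rev_sum (fun m => muF n θ p m * muF n θ q m), I3 n θ p q h]
  · have heq : ∑ k : Fin (n + 1), sphPartial n p θ k * sphPartial n q θ k
        = ∑ k : Fin (n + 1), (fun m => muF n θ q m * muF n θ p m) (n - (k : ℕ)) := by
      apply Finset.sum_congr rfl
      intro k _
      rw [sphPartial_eq, sphPartial_eq, mul_comm]
    rw [heq, rev_sum (fun m => muF n θ q m * muF n θ p m), I3 n θ q p h]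

lemma orth_key {N : ℕ} (e : Fin (N + 1) → (Fin (N + 1) → ℝ))
    (horth : ∀ i j, i ≠ j → ∑ k, e i k * e j k = 0)
    (g : Fin (N + 1) → ℝ) (i₀ : Fin (N + 1)) :
    (∑ l, (∑ i, g i * e i l) * e i₀ l) = g i₀ * ∑ l, e i₀ l * e i₀ l := by
  simp only [Finset.sum_mul]
  rw [Finset.sum_comm]
  have h1 : ∀ i : Fin (N + 1), ∑ l, g i * e i l * e i₀ l = g i * ∑ l, e i l * e i₀ l := by
    intro i
    rw [Finset.mul_sum]
    apply Finset.sum_congr rfl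
    intro l _; ring
  rw [Finset.sum_congr rfl (fun i _ => h1 i)]
  rw [Finset.sum_eq_single i₀]
  · intro i _ hi
    rw [horth i i₀ hi, mul_zero]
  · intro h; exact absurd (Finset.mem_univ i₀) h

lemma orth_expansion {N : ℕ} (e : Fin (N + 1) → (Fin (N + 1) → ℝ))
    (horth : ∀ i j, i ≠ j → ∑ k, e i k * e j k = 0)
    (hnz : ∀ i, ∑ k, e i k * e i k ≠ 0)
    (w : Fin (N + 1) → ℝ) :
    ∀ k, w k = ∑ i, ((∑ l, w l * e i l) / (∑ l, e i l * e i l)) * e i k := by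
  have li : LinearIndependent ℝ e := by
    rw [Fintype.linearIndependent_iff]
    intro g hg i₀
    have hg' : ∀ l, ∑ i, g i * e i l = 0 := by
      intro l
      have := congrFun hg l
      simpa [Finset.sum_apply, Pi.smul_apply, smul_eq_mul] using this
    have h0 : (∑ l, (∑ i, g i * e i l) * e i₀ l) = 0 := by
      simp [hg']
    rw [orth_key e horth g i₀] at h0
    exact (mul_eq_zero.1 h0).resolve_right (hnz i₀)
  have hcard : Fintype.card (Fin (N + 1)) = Module.finrank ℝ (Fin (N + 1) → ℝ) := by
    simp [Module.finrank_fin_fun]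
  let B := basisOfLinearIndependentOfCardEqFinrank li hcard
  have hB : ⇑B = e := coe_basisOfLinearIndependentOfCardEqFinrank li hcard
  have hrepr : ∀ l, w l = ∑ i, B.repr w i * e i l := by
    intro l
    conv_lhs => rw [← B.sum_repr w]
    simp [Finset.sum_apply, hB, smul_eq_mul]
  have hco : ∀ i₀ : Fin (N + 1),
      (B.repr w i₀ : ℝ) = (∑ l, w l * e i₀ l) / (∑ l, e i₀ l * e i₀ l) := by
    intro i₀
    have h1 : ∑ l, w l * e i₀ l = B.repr w i₀ * ∑ l, e i₀ l * e i₀ l := by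
      have h2 : ∑ l, w l * e i₀ l = ∑ l, (∑ i, B.repr w i * e i l) * e i₀ l := by
        apply Finset.sum_congr rfl
        intro l _
        rw [← hrepr l]
      rw [h2, orth_key e horth _ i₀]
    rw [h1, mul_div_assoc, div_self (hnz i₀), mul_one]
  intro k
  rw [hrepr k]
  apply Finset.sum_congr rfl
  intro i _
  rw [hco i]

end SPF
/-- Recovery of a pseudo regular frontal from its Legendre data.  Let
`f : U → ℝⁿ⁺¹` be a pseudo regular frontal with Gauss map `ν = νⁿ ∘ θ`
(`θ : Reg(f) → (−π,π)ⁿ`) and height function `a = f·ν`.  At every regular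
point `x` of `ν`, the differential `dθₓ` is a linear isomorphism, the system
`da = b₁ dθ₁ + ⋯ + bₙ dθₙ` has a unique solution `b`, and
`f(x) = a(x)ν(x) + Σⱼ (bⱼ/|μ̃ⱼ(θ(x))|)·μ̃ⱼ(θ(x))/|μ̃ⱼ(θ(x))|`. -/
theorem pseudo_regular_frontal_recovery (n : ℕ)
    (U : Set (Fin n → ℝ)) (hUo : IsOpen U)
    (f : (Fin n → ℝ) → (Fin (n + 1) → ℝ)) (hf : AnalyticOnNhd ℝ f U)
    (Regf : Set (Fin n → ℝ))
    (hRegf : Regf = {x | x ∈ U ∧ Function.Injective (fderiv ℝ f x)})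
    (hRegfDense : U ⊆ closure Regf)
    (θ : (Fin n → ℝ) → (Fin n → ℝ))
    (hθdiff : ∀ x ∈ Regf, DifferentiableAt ℝ θ x)
    (hθrange : ∀ x ∈ Regf, ∀ i : Fin n, θ x i ∈ Set.Ioo (-π) π)
    (ν : (Fin n → ℝ) → (Fin (n + 1) → ℝ))
    (hν : ∀ x ∈ Regf, ν x = sphParam n (θ x))
    (hGauss : ∀ x ∈ Regf, ∀ v : Fin n → ℝ,
      ∑ k, fderiv ℝ f x v k * ν x k = 0)
    (a : (Fin n → ℝ) → ℝ) (ha : ∀ x ∈ Regf, a x = ∑ k, f x k * ν x k)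
    (Regν : Set (Fin n → ℝ))
    (hRegν : Regν = {x | x ∈ Regf ∧ Function.Injective (fderiv ℝ ν x)})
    (hRegνDense : Regf ⊆ closure Regν) :
    ∀ x ∈ Regν,
      Function.Bijective (fderiv ℝ θ x) ∧
      (∃! b : Fin n → ℝ, ∀ v : Fin n → ℝ,
        fderiv ℝ a x v = ∑ j, b j * fderiv ℝ θ x v j) ∧
      (∀ b : Fin n → ℝ,
        (∀ v : Fin n → ℝ,
          fderiv ℝ a x v = ∑ j, b j * fderiv ℝ θ x v j) →
        ∀ k : Fin (n + 1),
          f x k = a x * ν x k +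
            ∑ j, (b j / Real.sqrt (∑ l, (sphPartial n j (θ x) l) ^ 2)) *
              (sphPartial n j (θ x) k /
                Real.sqrt (∑ l, (sphPartial n j (θ x) l) ^ 2))) := by
  classical
  -- `Regf` is open
  have hRegfOpen : IsOpen Regf := by
    have hcont : ContinuousOn (fderiv ℝ f) U := (hf.fderiv).continuousOn
    have hset : Regf = U ∩ (fderiv ℝ f) ⁻¹'
        {L : (Fin n → ℝ) →L[ℝ] (Fin (n + 1) → ℝ) | Function.Injective L} := by
      rw [hRegf]; ext y; simp [Set.mem_inter_iff, Set.mem_setOf_eq]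
    rw [hset]
    exact hcont.isOpen_inter_preimage hUo ContinuousLinearMap.isOpen_injective
  intro x hx
  have hxRegf : x ∈ Regf := (hRegν ▸ hx).1
  have hνinj : Function.Injective (fderiv ℝ ν x) := (hRegν ▸ hx).2
  have hxU : x ∈ U := (hRegf ▸ hxRegf).1
  have hnhds : Regf ∈ nhds x := hRegfOpen.mem_nhds hxRegf
  -- derivative of ν
  have hθx : DifferentiableAt ℝ θ x := hθdiff x hxRegf
  have hν_ev : ν =ᶠ[nhds x] fun y => sphParam n (θ y) :=
    Filter.eventuallyEq_of_mem hnhds (fun y hy => hν y hy)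
  have hNder : HasFDerivAt ν ((SPF.Dsph n (θ x)).comp (fderiv ℝ θ x)) x :=
    ((SPF.hasFDerivAt_sphParam n (θ x)).comp x hθx.hasFDerivAt).congr_of_eventuallyEq hν_ev
  have hνfderiv : fderiv ℝ ν x = (SPF.Dsph n (θ x)).comp (fderiv ℝ θ x) := hNder.fderiv
  -- `fderiv θ x` is bijective
  have hΘinj : Function.Injective (fderiv ℝ θ x) := by
    intro u v huv
    apply hνinj
    rw [hνfderiv]
    simp only [ContinuousLinearMap.comp_apply]
    rw [huv]
  have hΘsurj : Function.Surjective (fderiv ℝ θ x) :=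
    (LinearMap.injective_iff_surjective (f := (fderiv ℝ θ x).toLinearMap)).1 hΘinj
  have hΘbij : Function.Bijective (fderiv ℝ θ x) := ⟨hΘinj, hΘsurj⟩
  -- the differential of the sphere parametrization is injective at `θ x`
  have hDinj : ∀ w, SPF.Dsph n (θ x) w = 0 → w = 0 := by
    intro w hw
    obtain ⟨v, rfl⟩ := hΘsurj w
    have hv0 : fderiv ℝ ν x v = fderiv ℝ ν x 0 := by
      rw [hνfderiv]
      simp only [ContinuousLinearMap.comp_apply, map_zero]
      exact hw
    rw [hνinj hv0]
    simp
  -- the vectors μ̃ⱼ are nonzero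
  have hmu : ∀ j : Fin n, sphPartial n j (θ x) = SPF.Dsph n (θ x) (Pi.single j 1) := by
    intro j
    rw [sphPartial, (SPF.hasFDerivAt_sphParam n (θ x)).fderiv]
  have hmune : ∀ j : Fin n, sphPartial n j (θ x) ≠ 0 := by
    intro j h0
    have h1 : (Pi.single j 1 : Fin n → ℝ) = 0 := hDinj _ (by rw [← hmu j]; exact h0)
    have h2 := congrFun h1 j
    simp at h2
  have hS : ∀ j : Fin n, 0 < ∑ l, (sphPartial n j (θ x) l) ^ 2 := by
    intro j
    rcases Function.ne_iff.1 (hmune j) with ⟨l0, hl0⟩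
    have h1 : (0 : ℝ) < (sphPartial n j (θ x) l0) ^ 2 :=
      lt_of_le_of_ne (sq_nonneg _) (Ne.symm (pow_ne_zero 2 hl0))
    exact lt_of_lt_of_le h1
      (Finset.single_le_sum (f := fun l => (sphPartial n j (θ x) l) ^ 2)
        (fun l _ => sq_nonneg _) (Finset.mem_univ l0))
  -- derivative of a
  have hF : HasFDerivAt f (fderiv ℝ f x) x := ((hf x hxU).differentiableAt).hasFDerivAt
  have hsum : HasFDerivAt (fun y => ∑ k : Fin (n + 1), f y k * ν y k)
      (∑ k : Fin (n + 1),
        (f x k • ((ContinuousLinearMap.proj k).comp ((SPF.Dsph n (θ x)).comp (fderiv ℝ θ x)))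
          + ν x k • ((ContinuousLinearMap.proj k).comp (fderiv ℝ f x)))) x := by
    apply HasFDerivAt.fun_sum
    intro k _
    exact (hasFDerivAt_pi'.1 hF k).mul (hasFDerivAt_pi'.1 hNder k)
  have ha_ev : a =ᶠ[nhds x] fun y => ∑ k, f y k * ν y k :=
    Filter.eventuallyEq_of_mem hnhds (fun y hy => ha y hy)
  have haDer := hsum.congr_of_eventuallyEq ha_ev
  have hafderiv := haDer.fderiv
  -- the coefficients
  set bb : Fin n → ℝ := fun j => ∑ k, f x k * sphPartial n j (θ x) k with hbb
  have hda : ∀ v : Fin n → ℝ, fderiv ℝ a x v = ∑ j, bb j * fderiv ℝ θ x v j := by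
    intro v
    rw [hafderiv]
    simp only [ContinuousLinearMap.sum_apply, ContinuousLinearMap.add_apply,
      ContinuousLinearMap.smul_apply, ContinuousLinearMap.comp_apply,
      ContinuousLinearMap.proj_apply, smul_eq_mul]
    have hg : ∑ k : Fin (n + 1), ν x k * fderiv ℝ f x v k = 0 := by
      have h := hGauss x hxRegf v
      rw [Finset.sum_congr rfl (fun k _ => mul_comm (ν x k) (fderiv ℝ f x v k))]
      exact h
    rw [Finset.sum_add_distrib, hg, add_zero]
    have hstep : ∀ k : Fin (n + 1),
        f x k * SPF.Dsph n (θ x) (fderiv ℝ θ x v) k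
        = ∑ p, f x k * SPF.muF n (θ x) p (n - (k : ℕ)) * fderiv ℝ θ x v p := by
      intro k
      rw [SPF.Dsph_apply, Finset.mul_sum]
      apply Finset.sum_congr rfl
      intro p _
      ring
    rw [Finset.sum_congr rfl (fun k _ => hstep k), Finset.sum_comm]
    apply Finset.sum_congr rfl
    intro p _
    rw [hbb]
    simp only
    rw [Finset.sum_mul]
    apply Finset.sum_congr rfl
    intro k _
    rw [SPF.sphPartial_eq]
  have huniq : ∀ b : Fin n → ℝ,
      (∀ v : Fin n → ℝ, fderiv ℝ a x v = ∑ j, b j * fderiv ℝ θ x v j) → b = bb := by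
    intro b hb
    funext j
    obtain ⟨v, hv⟩ := hΘsurj (Pi.single j 1)
    have h1 := hb v
    have h2 := hda v
    rw [h1, hv] at h2
    have hsingle : ∀ c : Fin n → ℝ, ∑ i, c i * (Pi.single j 1 : Fin n → ℝ) i = c j := by
      intro c
      rw [Finset.sum_eq_single j]
      · simp
      · intro i _ hij
        simp [Pi.single_apply, hij]
      · intro h; exact absurd (Finset.mem_univ j) h
    rw [hsingle b, hsingle bb] at h2
    exact h2
  refine ⟨hΘbij, ⟨bb, hda, huniq⟩, ?_⟩
  -- recovery formula
  intro b hb k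
  rw [huniq b hb]
  -- orthogonal frame
  set e : Fin (n + 1) → (Fin (n + 1) → ℝ) :=
    Fin.cons (sphParam n (θ x)) (fun j => sphPartial n j (θ x)) with he
  have horth : ∀ i j, i ≠ j → ∑ l, e i l * e j l = 0 := by
    intro i j hij
    induction i using Fin.cases with
    | zero =>
      induction j using Fin.cases with
      | zero => exact absurd rfl hij
      | succ j =>
        simp only [he, Fin.cons_zero, Fin.cons_succ]
        exact SPF.dot_sph_mu n (θ x) j
    | succ i =>
      induction j using Fin.cases with
      | zero =>
        simp only [he, Fin.cons_zero, Fin.cons_succ]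
        rw [Finset.sum_congr rfl
          (fun l _ => mul_comm (sphPartial n i (θ x) l) (sphParam n (θ x) l))]
        exact SPF.dot_sph_mu n (θ x) i
      | succ j =>
        simp only [he, Fin.cons_succ]
        exact SPF.dot_mu_mu n (θ x) (fun h => hij (by rw [h]))
  have hnz : ∀ i, ∑ l, e i l * e i l ≠ 0 := by
    intro i
    induction i using Fin.cases with
    | zero =>
      simp only [he, Fin.cons_zero]
      rw [SPF.dot_sph_sph n (θ x)]
      exact one_ne_zero
    | succ i =>
      simp only [he, Fin.cons_succ]
      have h := hS i
      rw [Finset.sum_congr rfl (fun l (_ : l ∈ Finset.univ) => pow_two (sphPartial n i (θ x) l))] at h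
      exact ne_of_gt h
  have hexp := SPF.orth_expansion e horth hnz (f x) k
  rw [hexp, Fin.sum_univ_succ]
  simp only [he, Fin.cons_zero, Fin.cons_succ]
  congr 1
  · -- zeroth term is a x * ν x k
    rw [SPF.dot_sph_sph n (θ x), div_one]
    have h1 : ∑ l, f x l * sphParam n (θ x) l = a x := by
      rw [ha x hxRegf, hν x hxRegf]
    rw [h1]
    congr 1
    exact (congrFun (hν x hxRegf) k).symm
  · -- the μ-terms
    apply Finset.sum_congr rfl
    intro j _
    have hSj : ∑ l, sphPartial n j (θ x) l * sphPartial n j (θ x) l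
        = ∑ l, (sphPartial n j (θ x) l) ^ 2 :=
      Finset.sum_congr rfl (fun l _ => (pow_two (sphPartial n j (θ x) l)).symm)
    rw [hSj]
    rw [div_mul_div_comm, Real.mul_self_sqrt (le_of_lt (hS j))]
    rw [hbb]
    simp only
    rw [div_mul_eq_mul_div]
end
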